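/- In the path category EFF, every fibration is a fibration of sets (i.e., a fibration of 0-types). -/

import Mathlib

namespace EffPaper

/-! ### A small kit for tracking by partial computable functions.

We encode "partial computable function" via Mathlib's `Partrec` on `ℕ →. ℕ`.
`CompComputes I O` says: there is a partial computable function which, on the input
`I x`, converges and outputs `O x` (for every `x` in some index type `X`).
`CompFinds I S` says: there is a partial computable function which, on the input
`I x`, converges and outputs some element of the set `S x`. -/

def CompComputes {X : Sort*} (I O : X → ℕ) : Prop :=
  ∃ F : ℕ →. ℕ, Partrec F ∧ ∀ x, O x ∈ F (I x)

def CompFinds {X : Sort*} (I : X → ℕ) (S : X → Set ℕ) : Prop :=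
  ∃ F : ℕ →. ℕ, Partrec F ∧ ∀ x, ∃ k, k ∈ F (I x) ∧ k ∈ S x

namespace CompComputes

protected theorem id {X : Sort*} (I : X → ℕ) : CompComputes I I :=
  ⟨fun n => Part.some n, Partrec.some, fun x => Part.mem_some _⟩

protected theorem const {X : Sort*} (I : X → ℕ) (c : ℕ) : CompComputes I fun _ => c :=
  ⟨fun _ => Part.some c, (Computable.const c).partrec, fun _ => Part.mem_some _⟩

protected theorem comp {X : Sort*} {I M O : X → ℕ}
    (h₂ : CompComputes M O) (h₁ : CompComputes I M) : CompComputes I O := by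
  obtain ⟨F₁, pF₁, s₁⟩ := h₁
  obtain ⟨F₂, pF₂, s₂⟩ := h₂
  refine ⟨fun n => (F₁ n).bind F₂, pF₁.bind (pF₂.comp Computable.snd), fun x => ?_⟩
  exact Part.mem_bind_iff.mpr ⟨M x, s₁ x, s₂ x⟩

protected theorem pair {X : Sort*} {I a b : X → ℕ}
    (ha : CompComputes I a) (hb : CompComputes I b) :
    CompComputes I (fun x => Nat.pair (a x) (b x)) := by
  obtain ⟨F₁, pF₁, s₁⟩ := ha
  obtain ⟨F₂, pF₂, s₂⟩ := hb
  refine ⟨fun n => (F₁ n).bind fun u => (F₂ n).map fun v => Nat.pair u v, ?_, fun x => ?_⟩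
  · refine pF₁.bind ?_
    have : Computable₂ fun (p : ℕ × ℕ) (v : ℕ) => Nat.pair p.2 v :=
      Primrec₂.to_comp (Primrec₂.natPair.comp (Primrec.snd.comp Primrec.fst) Primrec.snd)
    exact Partrec.map (pF₂.comp Computable.fst) this
  · exact Part.mem_bind_iff.mpr ⟨a x, s₁ x, (Part.mem_map_iff _).mpr ⟨b x, s₂ x, rfl⟩⟩

protected theorem unpairL {X : Sort*} (I : X → ℕ) :
    CompComputes I (fun x => (I x).unpair.1) :=
  ⟨fun n => Part.some n.unpair.1,
    (Primrec.to_comp (Primrec.fst.comp Primrec.unpair)).partrec, fun _ => Part.mem_some _⟩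

protected theorem unpairR {X : Sort*} (I : X → ℕ) :
    CompComputes I (fun x => (I x).unpair.2) :=
  ⟨fun n => Part.some n.unpair.2,
    (Primrec.to_comp (Primrec.snd.comp Primrec.unpair)).partrec, fun _ => Part.mem_some _⟩

protected theorem projL {X : Sort*} (a b : X → ℕ) :
    CompComputes (fun x => Nat.pair (a x) (b x)) a := by
  have := CompComputes.unpairL (X := X) (fun x => Nat.pair (a x) (b x))
  simpa [Nat.unpair_pair] using this

protected theorem projR {X : Sort*} (a b : X → ℕ) :
    CompComputes (fun x => Nat.pair (a x) (b x)) b := by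
  have := CompComputes.unpairR (X := X) (fun x => Nat.pair (a x) (b x))
  simpa [Nat.unpair_pair] using this

protected theorem precomp {X Y : Sort*} {I O : X → ℕ} (h : CompComputes I O) (e : Y → X) :
    CompComputes (fun y => I (e y)) (fun y => O (e y)) := by
  obtain ⟨F, pF, s⟩ := h
  exact ⟨F, pF, fun y => s (e y)⟩

protected theorem toFinds {X : Sort*} {I o : X → ℕ} {S : X → Set ℕ}
    (h : CompComputes I o) (hm : ∀ x, o x ∈ S x) : CompFinds I S := by
  obtain ⟨F, pF, s⟩ := h
  exact ⟨F, pF, fun x => ⟨o x, s x, hm x⟩⟩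

end CompComputes

namespace CompFinds

protected theorem toComputes {X : Sort*} {I : X → ℕ} {S : X → Set ℕ} (h : CompFinds I S) :
    ∃ o : X → ℕ, (∀ x, o x ∈ S x) ∧ CompComputes I o := by
  obtain ⟨F, pF, s⟩ := h
  refine ⟨fun x => (s x).choose, fun x => (s x).choose_spec.2, F, pF, fun x => (s x).choose_spec.1⟩

/-- Reindex a `CompFinds` along `e` and chase the input through a computable function. -/
protected theorem via {Y X : Sort*} {J : X → ℕ} {S : X → Set ℕ} (h : CompFinds J S)
    {I : Y → ℕ} (e : Y → X) (hc : CompComputes I (fun y => J (e y))) :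
    CompFinds I (fun y => S (e y)) := by
  obtain ⟨o, hm, hcc⟩ := h.toComputes
  exact CompComputes.toFinds ((hcc.precomp e).comp hc) (fun y => hm (e y))

end CompFinds

end EffPaper

namespace EffPaper

open CategoryTheory

universe v u

/-! ### Path categories (Van den Berg–Moerdijk style), abstractly.

A `PathStruct` on a category is a pair of classes of maps: fibrations and equivalences.
`IsPathCategory` expresses the seven axioms of a path category. -/

structure PathStruct (C : Type u) [Category.{v} C] where
  Fib : ∀ ⦃X Y : C⦄, (X ⟶ Y) → Prop
  Eqv : ∀ ⦃X Y : C⦄, (X ⟶ Y) → Prop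

section PathCatDefs

variable {C : Type u} [Category.{v} C]

/-- `T` is a terminal object. -/
def IsTerminalObj (T : C) : Prop := ∀ Z : C, ∃ f : Z ⟶ T, ∀ g : Z ⟶ T, g = f

/-- The square with projections `p₁, p₂` is a pullback of the cospan `f, g`. -/
def IsPB {P X Y Z : C} (p₁ : P ⟶ X) (p₂ : P ⟶ Y) (f : X ⟶ Z) (g : Y ⟶ Z) : Prop :=
  p₁ ≫ f = p₂ ≫ g ∧ ∀ (Q : C) (q₁ : Q ⟶ X) (q₂ : Q ⟶ Y), q₁ ≫ f = q₂ ≫ g →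
    ∃! h : Q ⟶ P, h ≫ p₁ = q₁ ∧ h ≫ p₂ = q₂

/-- `p₁, p₂` exhibit their common domain as a binary product of `X` and `Y`. -/
def IsBinProd {P X Y : C} (p₁ : P ⟶ X) (p₂ : P ⟶ Y) : Prop :=
  ∀ (Q : C) (q₁ : Q ⟶ X) (q₂ : Q ⟶ Y), ∃! h : Q ⟶ P, h ≫ p₁ = q₁ ∧ h ≫ p₂ = q₂

variable (S : PathStruct C)

/-- `X → PX → X × X` is a path object for `X`: the first map is an equivalence, the
second (the pairing of `s` and `t` into a binary product `X × X`) is a fibration,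
and the composite is the diagonal. -/
def IsPathObj {X PX : C} (r : X ⟶ PX) (s t : PX ⟶ X) : Prop :=
  S.Eqv r ∧ r ≫ s = 𝟙 X ∧ r ≫ t = 𝟙 X ∧
  ∃ (W : C) (π₁ π₂ : W ⟶ X) (h : PX ⟶ W),
    IsBinProd π₁ π₂ ∧ h ≫ π₁ = s ∧ h ≫ π₂ = t ∧ S.Fib h

/-- A path object for `p : X ⟶ I` in the slice path category `C(I)`:
a factorisation of the fibrewise diagonal `X ⟶ X ×_I X` as an equivalence `r`
followed by a fibration. -/
def IsRelPathObj {X I PX : C} (p : X ⟶ I) (r : X ⟶ PX) (s t : PX ⟶ X) : Prop :=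
  S.Eqv r ∧ r ≫ s = 𝟙 X ∧ r ≫ t = 𝟙 X ∧ s ≫ p = t ≫ p ∧
  ∃ (W : C) (π₁ π₂ : W ⟶ X) (h : PX ⟶ W),
    IsPB π₁ π₂ p p ∧ h ≫ π₁ = s ∧ h ≫ π₂ = t ∧ S.Fib h

/-- The seven axioms for a path category. -/
structure IsPathCategory : Prop where
  fib_of_iso : ∀ {X Y : C} (f : X ⟶ Y), IsIso f → S.Fib f
  fib_comp : ∀ {X Y Z : C} (f : X ⟶ Y) (g : Y ⟶ Z), S.Fib f → S.Fib g → S.Fib (f ≫ g)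
  terminal : ∃ T : C, IsTerminalObj T ∧ ∀ (X : C) (f : X ⟶ T), S.Fib f
  pullback : ∀ {X Y Z : C} (f : X ⟶ Z) (g : Y ⟶ Z), S.Fib f →
    ∃ (P : C) (p₁ : P ⟶ X) (p₂ : P ⟶ Y), IsPB p₁ p₂ f g ∧ S.Fib p₂
  eqv_of_iso : ∀ {X Y : C} (f : X ⟶ Y), IsIso f → S.Eqv f
  two_out_of_six : ∀ {X Y Z W : C} (f : X ⟶ Y) (g : Y ⟶ Z) (h : Z ⟶ W),
    S.Eqv (f ≫ g) → S.Eqv (g ≫ h) →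
    S.Eqv f ∧ S.Eqv g ∧ S.Eqv h ∧ S.Eqv (f ≫ g ≫ h)
  path_obj : ∀ X : C, ∃ (PX : C) (r : X ⟶ PX) (s t : PX ⟶ X), IsPathObj S r s t
  triv_fib_pb : ∀ {X Y Z P : C} (f : X ⟶ Z) (g : Y ⟶ Z) (p₁ : P ⟶ X) (p₂ : P ⟶ Y),
    S.Fib f → S.Eqv f → IsPB p₁ p₂ f g → S.Fib p₂ ∧ S.Eqv p₂
  triv_fib_sect : ∀ {X Y : C} (f : X ⟶ Y), S.Fib f → S.Eqv f → ∃ s : Y ⟶ X, s ≫ f = 𝟙 Y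

/-- Two parallel maps are homotopic: `(f,g)` factors through some path object. -/
def Homotopic {Z X : C} (f g : Z ⟶ X) : Prop :=
  ∃ (PX : C) (r : X ⟶ PX) (s t : PX ⟶ X), IsPathObj S r s t ∧
    ∃ H : Z ⟶ PX, H ≫ s = f ∧ H ≫ t = g

/-- `f` and `g` are fibrewise homotopic over the codomain of `p`:
`(f,g)` factors through some path object of `p` in the slice. -/
def FibHomotopic {Z X I : C} (p : X ⟶ I) (f g : Z ⟶ X) : Prop :=
  ∃ (PX : C) (r : X ⟶ PX) (s t : PX ⟶ X), IsRelPathObj S p r s t ∧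
    ∃ H : Z ⟶ PX, H ≫ s = f ∧ H ≫ t = g

/-- `IsNTypeFib S n f` says that `f` is a fibration of `(n-2)`-types; so `n = 0`
corresponds to hlevel `-2` (trivial fibrations), `n = 1` to propositions,
`n = 2` to sets and `n = 3` to groupoids. -/
def IsNTypeFib : ℕ → ∀ ⦃Y X : C⦄, (Y ⟶ X) → Prop
  | 0, _, _, f => S.Fib f ∧ S.Eqv f
  | n+1, Y, _, f => S.Fib f ∧ ∃ (PY W : C) (r : Y ⟶ PY) (s t : PY ⟶ Y)
      (π₁ π₂ : W ⟶ Y) (h : PY ⟶ W),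
      IsRelPathObj S f r s t ∧ IsPB π₁ π₂ f f ∧ h ≫ π₁ = s ∧ h ≫ π₂ = t ∧
      IsNTypeFib n h

/-- The (strictly) commutative square with vertical fibrations `g` (left) and `f` (right),
top `top` and bottom `bot`, is a homotopy pullback: the induced map to the actual
pullback is an equivalence. -/
def IsHomotopyPB {D Cc B A : C} (g : D ⟶ Cc) (top : D ⟶ B) (f : B ⟶ A) (bot : Cc ⟶ A) :
    Prop :=
  g ≫ bot = top ≫ f ∧ ∃ (P : C) (p₁ : P ⟶ Cc) (p₂ : P ⟶ B) (h : D ⟶ P),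
    IsPB p₁ p₂ bot f ∧ h ≫ p₁ = g ∧ h ≫ p₂ = top ∧ S.Eqv h

/-- A transport structure on the fibration `p : Y ⟶ X`, relative to the path object
`(PX, r, s, t)` and the pullback `(Q, q₁, q₂)` of `s : PX ⟶ X` along `p`:
a map `Γ : Y ×_X PX ⟶ Y` with `p ∘ Γ = t ∘ q₂` and `Γ ∘ (1_Y, r ∘ p) ≃_X 1_Y`. -/
def IsTransport {Y X PX Q : C} (p : Y ⟶ X) (r : X ⟶ PX) (s t : PX ⟶ X)
    (q₁ : Q ⟶ Y) (q₂ : Q ⟶ PX) (Γ : Q ⟶ Y) : Prop :=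
  Γ ≫ p = q₂ ≫ t ∧
  ∀ j : Y ⟶ Q, j ≫ q₁ = 𝟙 Y → j ≫ q₂ = p ≫ r → FibHomotopic S p (j ≫ Γ) (𝟙 Y)

/-- A fibration `p : Y ⟶ X` is univalent: whenever `f, g : Z ⟶ X` and
`w : f*p ⟶ g*p` is an equivalence over `Z`, there is a homotopy `H` from `f` to `g`
such that `w` is fibrewise homotopic over `Z` to the map induced by `H` and a
transport structure on `p`. -/
def Univalent {Y X : C} (p : Y ⟶ X) : Prop :=
  ∀ {Z Zf Zg : C} (f g : Z ⟶ X) (a₁ : Zf ⟶ Z) (a₂ : Zf ⟶ Y) (b₁ : Zg ⟶ Z) (b₂ : Zg ⟶ Y),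
    IsPB a₁ a₂ f p → IsPB b₁ b₂ g p →
    ∀ w : Zf ⟶ Zg, w ≫ b₁ = a₁ → S.Eqv w →
    ∃ (PX Q : C) (r : X ⟶ PX) (s t : PX ⟶ X) (q₁ : Q ⟶ Y) (q₂ : Q ⟶ PX) (Γ : Q ⟶ Y)
      (H : Z ⟶ PX) (k : Zf ⟶ Q) (w' : Zf ⟶ Zg),
      IsPathObj S r s t ∧ IsPB q₁ q₂ p s ∧ IsTransport S p r s t q₁ q₂ Γ ∧
      H ≫ s = f ∧ H ≫ t = g ∧
      k ≫ q₁ = a₂ ∧ k ≫ q₂ = a₁ ≫ H ∧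
      w' ≫ b₁ = a₁ ∧ w' ≫ b₂ = k ≫ Γ ∧
      FibHomotopic S b₁ w w'

/-- `π : E ⟶ U` is a representation for the class `Small`: it is small, and every
small fibration is a homotopy pullback of it. -/
def IsRepresentation (Small : ∀ ⦃X Y : C⦄, (X ⟶ Y) → Prop) {E U : C} (π : E ⟶ U) : Prop :=
  Small π ∧ ∀ ⦃B A : C⦄ (f : B ⟶ A), Small f →
    ∃ (c : A ⟶ U) (top : B ⟶ E), IsHomotopyPB S f top π c

/-- `M` is a good lift for the universal property of the homotopy Π-type
`(pE, u₁, u₂, ε)` of `g` along `f`, at the map `h : A ⟶ X` with chosen pullback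
`(Ah, v₁, v₂)` of `h` along `f` and `m : f*h ⟶ g` over `Y`. -/
def HPiLiftGood {Y X Z E F A Ah : C} (f : Y ⟶ X) (g : Z ⟶ Y) (pE : E ⟶ X)
    (u₁ : F ⟶ E) (u₂ : F ⟶ Y) (ε : F ⟶ Z)
    (h : A ⟶ X) (v₁ : Ah ⟶ A) (v₂ : Ah ⟶ Y) (m : Ah ⟶ Z) (M : A ⟶ E) : Prop :=
  M ≫ pE = h ∧ ∀ fM : Ah ⟶ F, fM ≫ u₁ = v₁ ≫ M → fM ≫ u₂ = v₂ →
    FibHomotopic S g (fM ≫ ε) m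

/-- `(pE, u₁, u₂, ε)` is a homotopy Π-type of the fibration `g : Z ⟶ Y` along the
fibration `f : Y ⟶ X`.  Here `pE : E ⟶ X` is the Π-fibration, `(F, u₁, u₂)` is a
pullback of `pE` along `f`, and `ε : f*pE ⟶ g` is the counit (a map over `Y`). -/
structure IsHPi {Y X Z E F : C} (f : Y ⟶ X) (g : Z ⟶ Y) (pE : E ⟶ X)
    (u₁ : F ⟶ E) (u₂ : F ⟶ Y) (ε : F ⟶ Z) : Prop where
  fib : S.Fib pE
  pb : IsPB u₁ u₂ pE f
  isOver : ε ≫ g = u₂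
  lift : ∀ {A Ah : C} (h : A ⟶ X) (v₁ : Ah ⟶ A) (v₂ : Ah ⟶ Y), IsPB v₁ v₂ h f →
    ∀ m : Ah ⟶ Z, m ≫ g = v₂ →
      ∃ M : A ⟶ E, HPiLiftGood S f g pE u₁ u₂ ε h v₁ v₂ m M
  unique : ∀ {A Ah : C} (h : A ⟶ X) (v₁ : Ah ⟶ A) (v₂ : Ah ⟶ Y), IsPB v₁ v₂ h f →
    ∀ m : Ah ⟶ Z, m ≫ g = v₂ → ∀ M M' : A ⟶ E,
      HPiLiftGood S f g pE u₁ u₂ ε h v₁ v₂ m M →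
      HPiLiftGood S f g pE u₁ u₂ ε h v₁ v₂ m M' →
      FibHomotopic S pE M M'

/-- The path category has homotopy Π-types. -/
def HasHPi : Prop := ∀ ⦃Y X Z : C⦄ (f : Y ⟶ X) (g : Z ⟶ Y), S.Fib f → S.Fib g →
  ∃ (E F : C) (pE : E ⟶ X) (u₁ : F ⟶ E) (u₂ : F ⟶ Y) (ε : F ⟶ Z),
    IsHPi S f g pE u₁ u₂ ε

/-- A class of small fibrations: contained in the fibrations, containing all
isomorphisms, closed under composition and stable under homotopy pullback. -/
def IsSmallClass (Small : ∀ ⦃X Y : C⦄, (X ⟶ Y) → Prop) : Prop :=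
  (∀ ⦃X Y : C⦄ (f : X ⟶ Y), Small f → S.Fib f) ∧
  (∀ ⦃X Y : C⦄ (f : X ⟶ Y), IsIso f → Small f) ∧
  (∀ ⦃X Y Z : C⦄ (f : X ⟶ Y) (g : Y ⟶ Z), Small f → Small g → Small (f ≫ g)) ∧
  (∀ ⦃D Cc B A : C⦄ (g : D ⟶ Cc) (top : D ⟶ B) (f : B ⟶ A) (bot : Cc ⟶ A),
    S.Fib g → S.Fib f → Small f → IsHomotopyPB S g top f bot → Small g)

/-- The class `Small` is closed under homotopy Π-types along arbitrary fibrations: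
it is impredicative (polymorphic). -/
def ClosedUnderHPi (Small : ∀ ⦃X Y : C⦄, (X ⟶ Y) → Prop) : Prop :=
  ∀ ⦃Y X Z : C⦄ (f : Y ⟶ X) (g : Z ⟶ Y), S.Fib f → Small g →
    ∀ ⦃E F : C⦄ (pE : E ⟶ X) (u₁ : F ⟶ E) (u₂ : F ⟶ Y) (ε : F ⟶ Z),
      IsHPi S f g pE u₁ u₂ ε → Small pE

end PathCatDefs

end EffPaper
open CategoryTheory
namespace EffPaper
-- [assume p1 kit present]

/-! ### The category `EFF`. -/

/-- An object of `EFF`: a set `A`, a realizer function `α : A → ℕ`, sets of 1-cells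
`hom a a' ⊆ ℕ`, and partial computable functions computing identity, inverse and
composite 1-cells from the realizers of the relevant data. -/
structure EffObj : Type 1 where
  A : Type
  α : A → ℕ
  hom : A → A → Set ℕ
  idc : CompFinds (fun a : A => α a) (fun a => hom a a)
  invc : CompFinds
    (fun x : {p : A × A × ℕ // p.2.2 ∈ hom p.1 p.2.1} =>
      Nat.pair (α x.1.1) (Nat.pair (α x.1.2.1) x.1.2.2))
    (fun x => hom x.1.2.1 x.1.1)
  compc : CompFinds
    (fun x : {p : A × A × A × ℕ × ℕ //
        p.2.2.2.1 ∈ hom p.1 p.2.1 ∧ p.2.2.2.2 ∈ hom p.2.1 p.2.2.1} =>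
      Nat.pair (α x.1.1) (Nat.pair (α x.1.2.1) (Nat.pair (α x.1.2.2.1)
        (Nat.pair x.1.2.2.2.1 x.1.2.2.2.2))))
    (fun x => hom x.1.1 x.1.2.2.1)

/-- The 1-cells of an object of `EFF` between `a` and `a'`. -/
def EffObj.Cell (A : EffObj) (a a' : A.A) : Type := {n : ℕ // n ∈ A.hom a a'}

/-- A morphism of `EFF`: a function on 0-cells and functions on 1-cells, both
computably tracked. -/
structure EffHom (B A : EffObj) : Type where
  f0 : B.A → A.A
  f1 : ∀ b b' : B.A, B.Cell b b' → A.Cell (f0 b) (f0 b')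
  tr0 : CompComputes (fun b : B.A => B.α b) (fun b => A.α (f0 b))
  tr1 : CompComputes
    (fun x : (b : B.A) × (b' : B.A) × B.Cell b b' =>
      Nat.pair (B.α x.1) (Nat.pair (B.α x.2.1) x.2.2.val))
    (fun x => (f1 x.1 x.2.1 x.2.2).val)

instance : Category.{0} EffObj where
  Hom B A := EffHom B A
  id A :=
    { f0 := fun a => a
      f1 := fun _ _ π => π
      tr0 := CompComputes.id _
      tr1 := (CompComputes.projR _ _).comp (CompComputes.projR _ _) }
  comp {X Y Z} f g :=
    { f0 := fun b => g.f0 (f.f0 b)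
      f1 := fun b b' π => g.f1 _ _ (f.f1 b b' π)
      tr0 := (g.tr0.precomp f.f0).comp f.tr0
      tr1 := by
        have hg := g.tr1.precomp
          (fun x : (b : X.A) × (b' : X.A) × X.Cell b b' =>
            (⟨f.f0 x.1, f.f0 x.2.1, f.f1 x.1 x.2.1 x.2.2⟩ :
              (b : Y.A) × (b' : Y.A) × Y.Cell b b'))
        refine hg.comp ?_
        refine CompComputes.pair ?_ (CompComputes.pair ?_ f.tr1)
        · exact (f.tr0.precomp (fun x : (b : X.A) × (b' : X.A) × X.Cell b b' => x.1)).comp (CompComputes.projL _ _)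
        · exact (f.tr0.precomp (fun x : (b : X.A) × (b' : X.A) × X.Cell b b' => x.2.1)).comp
            ((CompComputes.projL _ _).comp (CompComputes.projR _ _)) }

end EffPaper
namespace EffPaper
open CategoryTheory

/-! ### Homotopies, equivalences and fibrations in `EFF`. -/

/-- Two parallel maps in `EFF` are homotopic if there is a partial computable function
computing, from the realizer of each `b`, a 1-cell from `f b` to `g b`. -/
def EffHomotopic {B A : EffObj} (f g : EffHom B A) : Prop :=
  CompFinds (fun b : B.A => B.α b) (fun b => A.hom (f.f0 b) (g.f0 b))

/-- A map in `EFF` is a (homotopy) equivalence if it has a homotopy inverse. -/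
def EffEqv {B A : EffObj} (f : B ⟶ A) : Prop :=
  ∃ g : A ⟶ B, EffHomotopic (f ≫ g) (𝟙 B) ∧ EffHomotopic (g ≫ f) (𝟙 A)

/-- A map in `EFF` is a fibration: (i) 1-cells `π : f b → a` downstairs can be
computably lifted to 1-cells `ρ : b → b'` upstairs with `f b' = a`, `f ρ = π`;
(ii) given `ρ ∈ ℬ(b,b')` and `π ∈ 𝒜(fb,fb')` one can compute `ρ' ∈ ℬ(b,b')`
with `f ρ' = π`. -/
def EffFib {B A : EffObj} (f : B ⟶ A) : Prop :=
  (∃ φ ψ : ℕ →. ℕ, Partrec φ ∧ Partrec ψ ∧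
    ∀ (b : B.A) (a : A.A) (π : ℕ), π ∈ A.hom (f.f0 b) a →
      ∃ (b' : B.A) (ρ : B.Cell b b'),
        f.f0 b' = a ∧ (f.f1 b b' ρ).val = π ∧
        B.α b' ∈ φ (Nat.pair (B.α b) (Nat.pair (A.α a) π)) ∧
        ρ.val ∈ ψ (Nat.pair (B.α b) (Nat.pair (A.α a) π))) ∧
  (∃ χ : ℕ →. ℕ, Partrec χ ∧
    ∀ (b b' : B.A) (ρ : B.Cell b b') (π : ℕ), π ∈ A.hom (f.f0 b) (f.f0 b') →
      ∃ ρ' : B.Cell b b', (f.f1 b b' ρ').val = π ∧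
        ρ'.val ∈ χ (Nat.pair (B.α b) (Nat.pair (B.α b') (Nat.pair ρ.val π))))

/-- The path structure on `EFF`: fibrations and (homotopy) equivalences. -/
def EffPS : PathStruct EffObj where
  Fib := fun {_ _} f => EffFib f
  Eqv := fun {_ _} f => EffEqv f

/-- A fibration in `EFF` is a standard discrete fibration if elements of the domain
are determined by their image and their realizer. -/
def EffStdDisc {B A : EffObj} (f : B ⟶ A) : Prop :=
  EffFib f ∧ ∀ b b' : B.A, f.f0 b = f.f0 b' → B.α b = B.α b' → b = b'

/-- A fibration in `EFF` is discrete if it can be written as a standard discrete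
fibration after an equivalence. -/
def EffDisc {B A : EffObj} (f : B ⟶ A) : Prop :=
  EffFib f ∧ ∃ (B' : EffObj) (w : B ⟶ B') (g : B' ⟶ A),
    EffEqv w ∧ EffStdDisc g ∧ w ≫ g = f

end EffPaper
namespace EffPaper

/-! ### Auxiliary material for Statement 7. -/

set_option maxHeartbeats 1000000 in
theorem CompComputes.ofEq {X : Sort*} {I O O' : X → ℕ} (h : CompComputes I O)
    (e : ∀ x, O x = O' x) : CompComputes I O' := by
  have : O = O' := funext e
  exact this ▸ h

theorem CompComputes.unpair1 {X : Sort*} {I O : X → ℕ} (h : CompComputes I O) :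
    CompComputes I fun x => (O x).unpair.1 := (CompComputes.unpairL O).comp h

theorem CompComputes.unpair2 {X : Sort*} {I O : X → ℕ} (h : CompComputes I O) :
    CompComputes I fun x => (O x).unpair.2 := (CompComputes.unpairR O).comp h

@[simp] theorem comp_f0 {B C D : EffObj} (f : B ⟶ C) (g : C ⟶ D) (b : B.A) :
    (f ≫ g).f0 b = g.f0 (f.f0 b) := rfl

@[simp] theorem comp_f1_val {B C D : EffObj} (f : B ⟶ C) (g : C ⟶ D) (b b' : B.A)
    (ρ : B.Cell b b') :
    ((f ≫ g).f1 b b' ρ).val = (g.f1 _ _ (f.f1 b b' ρ)).val := rfl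

@[simp] theorem id_f0 {B : EffObj} (b : B.A) : (𝟙 B : B ⟶ B).f0 b = b := rfl

@[simp] theorem id_f1_val {B : EffObj} (b b' : B.A) (ρ : B.Cell b b') :
    ((𝟙 B : B ⟶ B).f1 b b' ρ).val = ρ.val := rfl

theorem EffHom.ext' {B A : EffObj} {g h : B ⟶ A} (h0 : ∀ b, g.f0 b = h.f0 b)
    (h1 : ∀ b b' (ρ : B.Cell b b'), (g.f1 b b' ρ).val = (h.f1 b b' ρ).val) : g = h := by
  obtain ⟨g0, g1, gt0, gt1⟩ := g
  obtain ⟨h0', h1', ht0, ht1⟩ := h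
  obtain rfl : g0 = h0' := funext h0
  obtain rfl : g1 = h1' := by
    funext b b' ρ
    exact Subtype.ext (h1 b b' ρ)
  rfl

section Construction

variable {Y X : EffObj}

/-- The hom-sets of the fibrewise path object / pullback of `g` along itself:
pairs of cells with the same image under `g`. -/
def pairHom (g : Y ⟶ X) (y y' z z' : Y.A) : Set ℕ :=
  {n | ∃ (h1 : n.unpair.1 ∈ Y.hom y z) (h2 : n.unpair.2 ∈ Y.hom y' z'),
    (g.f1 y z ⟨n.unpair.1, h1⟩).val = (g.f1 y' z' ⟨n.unpair.2, h2⟩).val}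

theorem pairHom_fst {g : Y ⟶ X} {y y' z z' : Y.A} {n : ℕ}
    (h : n ∈ pairHom g y y' z z') : n.unpair.1 ∈ Y.hom y z := by
  obtain ⟨h1, -, -⟩ := h; exact h1

theorem pairHom_snd {g : Y ⟶ X} {y y' z z' : Y.A} {n : ℕ}
    (h : n ∈ pairHom g y y' z z') : n.unpair.2 ∈ Y.hom y' z' := by
  obtain ⟨-, h2, -⟩ := h; exact h2

theorem pairHom_eqv {g : Y ⟶ X} {y y' z z' : Y.A} {n : ℕ}
    (h : n ∈ pairHom g y y' z z') (h1 : n.unpair.1 ∈ Y.hom y z)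
    (h2 : n.unpair.2 ∈ Y.hom y' z') :
    (g.f1 y z ⟨n.unpair.1, h1⟩).val = (g.f1 y' z' ⟨n.unpair.2, h2⟩).val := by
  obtain ⟨a, b, c⟩ := h; exact c

theorem pairHom_intro {g : Y ⟶ X} {y y' z z' : Y.A} {n1 n2 : ℕ}
    (h1 : n1 ∈ Y.hom y z) (h2 : n2 ∈ Y.hom y' z')
    (he : (g.f1 y z ⟨n1, h1⟩).val = (g.f1 y' z' ⟨n2, h2⟩).val) :
    Nat.pair n1 n2 ∈ pairHom g y y' z z' := by
  simp only [pairHom, Set.mem_setOf_eq, Nat.unpair_pair]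
  exact ⟨h1, h2, he⟩

theorem hom_transport {Z : EffObj} {a a' b b' : Z.A} (ea : a = a') (eb : b = b')
    {n : ℕ} (h : n ∈ Z.hom a b) : n ∈ Z.hom a' b' := ea ▸ eb ▸ h

/-- Carrier of the strict pullback `Y ×_X Y`. -/
def WA (g : Y ⟶ X) : Type := {p : Y.A × Y.A // g.f0 p.1 = g.f0 p.2}

/-- Carrier of the fibrewise path object of `g`. -/
def TA (g : Y ⟶ X) : Type :=
  {q : Y.A × Y.A × ℕ // g.f0 q.1 = g.f0 q.2.1 ∧ q.2.2 ∈ Y.hom q.1 q.2.1}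

def hproj (g : Y ⟶ X) (q : TA g) : WA g := ⟨(q.val.1, q.val.2.1), q.property.1⟩

def Wα (g : Y ⟶ X) : WA g → ℕ := fun p => Nat.pair (Y.α p.val.1) (Y.α p.val.2)

def Tα (g : Y ⟶ X) : TA g → ℕ := fun q => Nat.pair (Wα g (hproj g q)) q.val.2.2

/-- Input data for fibration-lifting (condition (ii)): a cell `ρ : b → b'` upstairs
together with a cell `π : g b → g b'` downstairs. -/
def LA (g : Y ⟶ X) : Type :=
  {q : Y.A × Y.A × ℕ × ℕ //
    q.2.2.1 ∈ Y.hom q.1 q.2.1 ∧ q.2.2.2 ∈ X.hom (g.f0 q.1) (g.f0 q.2.1)}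

def LAidx (g : Y ⟶ X) : LA g → ℕ := fun q =>
  Nat.pair (Y.α q.val.1) (Nat.pair (Y.α q.val.2.1) (Nat.pair q.val.2.2.1 q.val.2.2.2))

theorem liftChoice (g : Y ⟶ X) (hg : EffFib g) : ∃ lf : LA g → ℕ,
    (∀ q, ∃ hm : lf q ∈ Y.hom q.val.1 q.val.2.1,
      (g.f1 q.val.1 q.val.2.1 ⟨lf q, hm⟩).val = q.val.2.2.2) ∧
    CompComputes (LAidx g) lf := by
  obtain ⟨χ, pχ, hχ⟩ := hg.2
  have H : ∀ q : LA g, ∃ n, (∃ hm : n ∈ Y.hom q.val.1 q.val.2.1,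
      (g.f1 q.val.1 q.val.2.1 ⟨n, hm⟩).val = q.val.2.2.2) ∧ n ∈ χ (LAidx g q) := by
    intro q
    obtain ⟨ρ', h1, h2⟩ := hχ q.val.1 q.val.2.1 ⟨q.val.2.2.1, q.property.1⟩
      q.val.2.2.2 q.property.2
    exact ⟨ρ'.val, ⟨ρ'.property, h1⟩, h2⟩
  exact ⟨fun q => (H q).choose, fun q => ((H q).choose_spec).1,
    χ, pχ, fun q => ((H q).choose_spec).2⟩

theorem idChoice (Y : EffObj) : ∃ o : Y.A → ℕ,
    (∀ a, o a ∈ Y.hom a a) ∧ CompComputes Y.α o := Y.idc.toComputes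

theorem invChoice (Y : EffObj) : ∃ o : {p : Y.A × Y.A × ℕ // p.2.2 ∈ Y.hom p.1 p.2.1} → ℕ,
    (∀ x, o x ∈ Y.hom x.val.2.1 x.val.1) ∧
    CompComputes (fun x : {p : Y.A × Y.A × ℕ // p.2.2 ∈ Y.hom p.1 p.2.1} =>
      Nat.pair (Y.α x.val.1) (Nat.pair (Y.α x.val.2.1) x.val.2.2)) o := Y.invc.toComputes

theorem cmpChoice (Y : EffObj) : ∃ o : {p : Y.A × Y.A × Y.A × ℕ × ℕ //
      p.2.2.2.1 ∈ Y.hom p.1 p.2.1 ∧ p.2.2.2.2 ∈ Y.hom p.2.1 p.2.2.1} → ℕ,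
    (∀ x, o x ∈ Y.hom x.val.1 x.val.2.2.1) ∧
    CompComputes (fun x : {p : Y.A × Y.A × Y.A × ℕ × ℕ //
        p.2.2.2.1 ∈ Y.hom p.1 p.2.1 ∧ p.2.2.2.2 ∈ Y.hom p.2.1 p.2.2.1} =>
      Nat.pair (Y.α x.val.1) (Nat.pair (Y.α x.val.2.1) (Nat.pair (Y.α x.val.2.2.1)
        (Nat.pair x.val.2.2.2.1 x.val.2.2.2.2)))) o := Y.compc.toComputes

end Construction
section Construction2

variable {Y X : EffObj}

/-- The strict pullback of `g` along itself, as an object of `EFF`. -/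
def Wobj (g : Y ⟶ X) (hg : EffFib g) : EffObj where
  A := WA g
  α := Wα g
  hom := fun p q => pairHom g p.val.1 p.val.2 q.val.1 q.val.2
  idc := by
    obtain ⟨ι, ιm, ιtr⟩ := idChoice Y
    obtain ⟨lf, lfm, lftr⟩ := liftChoice g hg
    have harg : ∀ p : WA g, (g.f1 p.val.1 p.val.1 ⟨ι p.val.1, ιm _⟩).val
        ∈ X.hom (g.f0 p.val.2) (g.f0 p.val.2) := by
      intro p
      have := (g.f1 p.val.1 p.val.1 ⟨ι p.val.1, ιm _⟩).property
      exact hom_transport p.property p.property this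
    let eId : WA g → LA g := fun p =>
      ⟨(p.val.2, p.val.2, ι p.val.2, (g.f1 p.val.1 p.val.1 ⟨ι p.val.1, ιm _⟩).val),
        ιm _, harg p⟩
    have s0 : CompComputes (fun p : WA g => Wα g p) (fun p : WA g => Wα g p) :=
      CompComputes.id _
    have sa : CompComputes (fun p : WA g => Wα g p) (fun p => Y.α p.val.1) :=
      s0.unpair1.ofEq (fun p => by simp [Wα])
    have sb : CompComputes (fun p : WA g => Wα g p) (fun p => Y.α p.val.2) :=
      s0.unpair2.ofEq (fun p => by simp [Wα])
    have sia : CompComputes (fun p : WA g => Wα g p) (fun p => ι p.val.1) :=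
      (ιtr.precomp (fun p : WA g => p.val.1)).comp sa
    have sib : CompComputes (fun p : WA g => Wα g p) (fun p => ι p.val.2) :=
      (ιtr.precomp (fun p : WA g => p.val.2)).comp sb
    have sg : CompComputes (fun p : WA g => Wα g p)
        (fun p => (g.f1 p.val.1 p.val.1 ⟨ι p.val.1, ιm _⟩).val) :=
      (g.tr1.precomp (fun p : WA g =>
        (⟨p.val.1, p.val.1, ⟨ι p.val.1, ιm _⟩⟩ :
          (b : Y.A) × (b' : Y.A) × Y.Cell b b'))).comp
        (CompComputes.pair sa (CompComputes.pair sa sia))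
    have slf : CompComputes (fun p : WA g => Wα g p) (fun p => lf (eId p)) :=
      (lftr.precomp eId).comp
        (CompComputes.pair sb (CompComputes.pair sb (CompComputes.pair sib sg)))
    refine (CompComputes.pair sia slf).toFinds ?_
    intro p
    exact pairHom_intro (ιm _) (lfm (eId p)).choose ((lfm (eId p)).choose_spec).symm
  invc := by
    obtain ⟨iv, ivm, ivtr⟩ := invChoice Y
    obtain ⟨lf, lfm, lftr⟩ := liftChoice g hg
    set T := {p : WA g × WA g × ℕ //
      p.2.2 ∈ pairHom g p.1.val.1 p.1.val.2 p.2.1.val.1 p.2.1.val.2} with hT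
    let eInv : T → {p : Y.A × Y.A × ℕ // p.2.2 ∈ Y.hom p.1 p.2.1} := fun x =>
      ⟨(x.val.1.val.1, x.val.2.1.val.1, x.val.2.2.unpair.1), pairHom_fst x.property⟩
    let eInv' : T → {p : Y.A × Y.A × ℕ // p.2.2 ∈ Y.hom p.1 p.2.1} := fun x =>
      ⟨(x.val.1.val.2, x.val.2.1.val.2, x.val.2.2.unpair.2), pairHom_snd x.property⟩
    have harg : ∀ x : T,
        (g.f1 x.val.2.1.val.1 x.val.1.val.1 ⟨iv (eInv x), ivm (eInv x)⟩).val
          ∈ X.hom (g.f0 x.val.2.1.val.2) (g.f0 x.val.1.val.2) := by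
      intro x
      have := (g.f1 x.val.2.1.val.1 x.val.1.val.1 ⟨iv (eInv x), ivm (eInv x)⟩).property
      exact hom_transport x.val.2.1.property x.val.1.property this
    let eL : T → LA g := fun x =>
      ⟨(x.val.2.1.val.2, x.val.1.val.2, iv (eInv' x),
        (g.f1 x.val.2.1.val.1 x.val.1.val.1 ⟨iv (eInv x), ivm (eInv x)⟩).val),
        ivm (eInv' x), harg x⟩
    have s0 : CompComputes (fun x : T =>
        Nat.pair (Wα g x.val.1) (Nat.pair (Wα g x.val.2.1) x.val.2.2))
        (fun x : T => Nat.pair (Wα g x.val.1) (Nat.pair (Wα g x.val.2.1) x.val.2.2)) :=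
      CompComputes.id _
    set I := fun x : T =>
      Nat.pair (Wα g x.val.1) (Nat.pair (Wα g x.val.2.1) x.val.2.2) with hI
    have sy : CompComputes I (fun x => Y.α x.val.1.val.1) :=
      s0.unpair1.unpair1.ofEq (fun x => by simp [hI, Wα])
    have sy' : CompComputes I (fun x => Y.α x.val.1.val.2) :=
      s0.unpair1.unpair2.ofEq (fun x => by simp [hI, Wα])
    have sz : CompComputes I (fun x => Y.α x.val.2.1.val.1) :=
      s0.unpair2.unpair1.unpair1.ofEq (fun x => by simp [hI, Wα])
    have sz' : CompComputes I (fun x => Y.α x.val.2.1.val.2) :=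
      s0.unpair2.unpair1.unpair2.ofEq (fun x => by simp [hI, Wα])
    have sμ : CompComputes I (fun x => x.val.2.2.unpair.1) :=
      s0.unpair2.unpair2.unpair1.ofEq (fun x => by simp [hI])
    have sν : CompComputes I (fun x => x.val.2.2.unpair.2) :=
      s0.unpair2.unpair2.unpair2.ofEq (fun x => by simp [hI])
    have siv1 : CompComputes I (fun x => iv (eInv x)) :=
      (ivtr.precomp eInv).comp (CompComputes.pair sy (CompComputes.pair sz sμ))
    have siv2 : CompComputes I (fun x => iv (eInv' x)) :=
      (ivtr.precomp eInv').comp (CompComputes.pair sy' (CompComputes.pair sz' sν))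
    have sg : CompComputes I
        (fun x => (g.f1 x.val.2.1.val.1 x.val.1.val.1 ⟨iv (eInv x), ivm (eInv x)⟩).val) :=
      (g.tr1.precomp (fun x : T =>
        (⟨x.val.2.1.val.1, x.val.1.val.1, ⟨iv (eInv x), ivm (eInv x)⟩⟩ :
          (b : Y.A) × (b' : Y.A) × Y.Cell b b'))).comp
        (CompComputes.pair sz (CompComputes.pair sy siv1))
    have slf : CompComputes I (fun x => lf (eL x)) :=
      (lftr.precomp eL).comp
        (CompComputes.pair sz' (CompComputes.pair sy' (CompComputes.pair siv2 sg)))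
    refine (CompComputes.pair siv1 slf).toFinds ?_
    intro x
    exact pairHom_intro (ivm (eInv x)) (lfm (eL x)).choose ((lfm (eL x)).choose_spec).symm
  compc := by
    obtain ⟨cm, cmm, cmtr⟩ := cmpChoice Y
    obtain ⟨lf, lfm, lftr⟩ := liftChoice g hg
    set T := {p : WA g × WA g × WA g × ℕ × ℕ //
      p.2.2.2.1 ∈ pairHom g p.1.val.1 p.1.val.2 p.2.1.val.1 p.2.1.val.2 ∧
      p.2.2.2.2 ∈ pairHom g p.2.1.val.1 p.2.1.val.2 p.2.2.1.val.1 p.2.2.1.val.2} with hT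
    let eC : T → {p : Y.A × Y.A × Y.A × ℕ × ℕ //
        p.2.2.2.1 ∈ Y.hom p.1 p.2.1 ∧ p.2.2.2.2 ∈ Y.hom p.2.1 p.2.2.1} := fun x =>
      ⟨(x.val.1.val.1, x.val.2.1.val.1, x.val.2.2.1.val.1,
        x.val.2.2.2.1.unpair.1, x.val.2.2.2.2.unpair.1),
        pairHom_fst x.property.1, pairHom_fst x.property.2⟩
    let eC' : T → {p : Y.A × Y.A × Y.A × ℕ × ℕ //
        p.2.2.2.1 ∈ Y.hom p.1 p.2.1 ∧ p.2.2.2.2 ∈ Y.hom p.2.1 p.2.2.1} := fun x =>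
      ⟨(x.val.1.val.2, x.val.2.1.val.2, x.val.2.2.1.val.2,
        x.val.2.2.2.1.unpair.2, x.val.2.2.2.2.unpair.2),
        pairHom_snd x.property.1, pairHom_snd x.property.2⟩
    have harg : ∀ x : T,
        (g.f1 x.val.1.val.1 x.val.2.2.1.val.1 ⟨cm (eC x), cmm (eC x)⟩).val
          ∈ X.hom (g.f0 x.val.1.val.2) (g.f0 x.val.2.2.1.val.2) := by
      intro x
      have := (g.f1 x.val.1.val.1 x.val.2.2.1.val.1 ⟨cm (eC x), cmm (eC x)⟩).property
      exact hom_transport x.val.1.property x.val.2.2.1.property this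
    let eL : T → LA g := fun x =>
      ⟨(x.val.1.val.2, x.val.2.2.1.val.2, cm (eC' x),
        (g.f1 x.val.1.val.1 x.val.2.2.1.val.1 ⟨cm (eC x), cmm (eC x)⟩).val),
        cmm (eC' x), harg x⟩
    set I := fun x : T =>
      Nat.pair (Wα g x.val.1) (Nat.pair (Wα g x.val.2.1) (Nat.pair (Wα g x.val.2.2.1)
        (Nat.pair x.val.2.2.2.1 x.val.2.2.2.2))) with hI
    have s0 : CompComputes I I := CompComputes.id _
    have sa : CompComputes I (fun x => Y.α x.val.1.val.1) :=
      s0.unpair1.unpair1.ofEq (fun x => by simp [Wα, hI])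
    have sa' : CompComputes I (fun x => Y.α x.val.1.val.2) :=
      s0.unpair1.unpair2.ofEq (fun x => by simp [Wα, hI])
    have sb : CompComputes I (fun x => Y.α x.val.2.1.val.1) :=
      s0.unpair2.unpair1.unpair1.ofEq (fun x => by simp [Wα, hI])
    have sb' : CompComputes I (fun x => Y.α x.val.2.1.val.2) :=
      s0.unpair2.unpair1.unpair2.ofEq (fun x => by simp [Wα, hI])
    have sc : CompComputes I (fun x => Y.α x.val.2.2.1.val.1) :=
      s0.unpair2.unpair2.unpair1.unpair1.ofEq (fun x => by simp [Wα, hI])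
    have sc' : CompComputes I (fun x => Y.α x.val.2.2.1.val.2) :=
      s0.unpair2.unpair2.unpair1.unpair2.ofEq (fun x => by simp [Wα, hI])
    have sm1 : CompComputes I (fun x => x.val.2.2.2.1.unpair.1) :=
      s0.unpair2.unpair2.unpair2.unpair1.unpair1.ofEq (fun x => by simp [hI])
    have sm1' : CompComputes I (fun x => x.val.2.2.2.1.unpair.2) :=
      s0.unpair2.unpair2.unpair2.unpair1.unpair2.ofEq (fun x => by simp [hI])
    have sm2 : CompComputes I (fun x => x.val.2.2.2.2.unpair.1) :=
      s0.unpair2.unpair2.unpair2.unpair2.unpair1.ofEq (fun x => by simp [hI])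
    have sm2' : CompComputes I (fun x => x.val.2.2.2.2.unpair.2) :=
      s0.unpair2.unpair2.unpair2.unpair2.unpair2.ofEq (fun x => by simp [hI])
    have scm1 : CompComputes I (fun x => cm (eC x)) :=
      (cmtr.precomp eC).comp (CompComputes.pair sa (CompComputes.pair sb
        (CompComputes.pair sc (CompComputes.pair sm1 sm2))))
    have scm2 : CompComputes I (fun x => cm (eC' x)) :=
      (cmtr.precomp eC').comp (CompComputes.pair sa' (CompComputes.pair sb'
        (CompComputes.pair sc' (CompComputes.pair sm1' sm2'))))
    have sg : CompComputes I
        (fun x => (g.f1 x.val.1.val.1 x.val.2.2.1.val.1 ⟨cm (eC x), cmm (eC x)⟩).val) :=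
      (g.tr1.precomp (fun x : T =>
        (⟨x.val.1.val.1, x.val.2.2.1.val.1, ⟨cm (eC x), cmm (eC x)⟩⟩ :
          (b : Y.A) × (b' : Y.A) × Y.Cell b b'))).comp
        (CompComputes.pair sa (CompComputes.pair sc scm1))
    have slf : CompComputes I (fun x => lf (eL x)) :=
      (lftr.precomp eL).comp
        (CompComputes.pair sa' (CompComputes.pair sc' (CompComputes.pair scm2 sg)))
    refine (CompComputes.pair scm1 slf).toFinds ?_
    intro x
    exact pairHom_intro (cmm (eC x)) (lfm (eL x)).choose ((lfm (eL x)).choose_spec).symm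

end Construction2
section Construction3

variable {Y X : EffObj}

/-- The fibrewise path object of `g`, as an object of `EFF`. -/
def PYobj (g : Y ⟶ X) (hg : EffFib g) : EffObj where
  A := TA g
  α := Tα g
  hom := fun p q => (Wobj g hg).hom (hproj g p) (hproj g q)
  idc := by
    refine (Wobj g hg).idc.via (hproj g) ?_
    exact (CompComputes.id (fun q : TA g => Tα g q)).unpair1.ofEq (fun q => by simp [Tα, Wobj])
  invc := by
    refine (Wobj g hg).invc.via
      (fun x : {p : TA g × TA g × ℕ //
          p.2.2 ∈ (Wobj g hg).hom (hproj g p.1) (hproj g p.2.1)} =>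
        (⟨(hproj g x.val.1, hproj g x.val.2.1, x.val.2.2), x.property⟩ :
          {p : (Wobj g hg).A × (Wobj g hg).A × ℕ //
            p.2.2 ∈ (Wobj g hg).hom p.1 p.2.1})) ?_
    set I := fun x : {p : TA g × TA g × ℕ //
        p.2.2 ∈ (Wobj g hg).hom (hproj g p.1) (hproj g p.2.1)} =>
      Nat.pair (Tα g x.val.1) (Nat.pair (Tα g x.val.2.1) x.val.2.2) with hI
    have s0 : CompComputes I I := CompComputes.id _
    refine CompComputes.pair (s0.unpair1.unpair1.ofEq (fun x => by simp [hI, Tα, Wobj]))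
      (CompComputes.pair (s0.unpair2.unpair1.unpair1.ofEq (fun x => by simp [hI, Tα, Wobj]))
        (s0.unpair2.unpair2.ofEq (fun x => by simp [hI])))
  compc := by
    refine (Wobj g hg).compc.via
      (fun x : {p : TA g × TA g × TA g × ℕ × ℕ //
          p.2.2.2.1 ∈ (Wobj g hg).hom (hproj g p.1) (hproj g p.2.1) ∧
          p.2.2.2.2 ∈ (Wobj g hg).hom (hproj g p.2.1) (hproj g p.2.2.1)} =>
        (⟨(hproj g x.val.1, hproj g x.val.2.1, hproj g x.val.2.2.1,
            x.val.2.2.2.1, x.val.2.2.2.2), x.property⟩ :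
          {p : (Wobj g hg).A × (Wobj g hg).A × (Wobj g hg).A × ℕ × ℕ //
            p.2.2.2.1 ∈ (Wobj g hg).hom p.1 p.2.1 ∧
            p.2.2.2.2 ∈ (Wobj g hg).hom p.2.1 p.2.2.1})) ?_
    set I := fun x : {p : TA g × TA g × TA g × ℕ × ℕ //
        p.2.2.2.1 ∈ (Wobj g hg).hom (hproj g p.1) (hproj g p.2.1) ∧
        p.2.2.2.2 ∈ (Wobj g hg).hom (hproj g p.2.1) (hproj g p.2.2.1)} =>
      Nat.pair (Tα g x.val.1) (Nat.pair (Tα g x.val.2.1) (Nat.pair (Tα g x.val.2.2.1)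
        (Nat.pair x.val.2.2.2.1 x.val.2.2.2.2))) with hI
    have s0 : CompComputes I I := CompComputes.id _
    refine CompComputes.pair (s0.unpair1.unpair1.ofEq (fun x => by simp [hI, Tα, Wobj]))
      (CompComputes.pair (s0.unpair2.unpair1.unpair1.ofEq (fun x => by simp [hI, Tα, Wobj]))
        (CompComputes.pair
          (s0.unpair2.unpair2.unpair1.unpair1.ofEq (fun x => by simp [hI, Tα, Wobj]))
          (CompComputes.pair
            (s0.unpair2.unpair2.unpair2.unpair1.ofEq (fun x => by simp [hI]))
            (s0.unpair2.unpair2.unpair2.unpair2.ofEq (fun x => by simp [hI])))))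

/-- Source map `s`. -/
def mS (g : Y ⟶ X) (hg : EffFib g) : PYobj g hg ⟶ Y where
  f0 := fun q => q.val.1
  f1 := fun _ _ n => ⟨n.val.unpair.1, pairHom_fst n.property⟩
  tr0 := (CompComputes.id (fun q : TA g => Tα g q)).unpair1.unpair1.ofEq
    (fun q => by simp [Tα, Wα, Wobj, hproj])
  tr1 := by
    set I := fun x : (b : TA g) × (b' : TA g) × (PYobj g hg).Cell b b' =>
      Nat.pair (Tα g x.1) (Nat.pair (Tα g x.2.1) x.2.2.val) with hI
    exact (CompComputes.id I).unpair2.unpair2.unpair1.ofEq (fun x => by simp [hI])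

/-- Target map `t`. -/
def mT (g : Y ⟶ X) (hg : EffFib g) : PYobj g hg ⟶ Y where
  f0 := fun q => q.val.2.1
  f1 := fun _ _ n => ⟨n.val.unpair.2, pairHom_snd n.property⟩
  tr0 := (CompComputes.id (fun q : TA g => Tα g q)).unpair1.unpair2.ofEq
    (fun q => by simp [Tα, Wα, Wobj, hproj])
  tr1 := by
    set I := fun x : (b : TA g) × (b' : TA g) × (PYobj g hg).Cell b b' =>
      Nat.pair (Tα g x.1) (Nat.pair (Tα g x.2.1) x.2.2.val) with hI
    exact (CompComputes.id I).unpair2.unpair2.unpair2.ofEq (fun x => by simp [hI])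

/-- First projection of the pullback. -/
def mPi1 (g : Y ⟶ X) (hg : EffFib g) : Wobj g hg ⟶ Y where
  f0 := fun p => p.val.1
  f1 := fun _ _ n => ⟨n.val.unpair.1, pairHom_fst n.property⟩
  tr0 := (CompComputes.id (fun p : WA g => Wα g p)).unpair1.ofEq (fun p => by simp [Wα])
  tr1 := by
    set I := fun x : (b : WA g) × (b' : WA g) × (Wobj g hg).Cell b b' =>
      Nat.pair (Wα g x.1) (Nat.pair (Wα g x.2.1) x.2.2.val) with hI
    exact (CompComputes.id I).unpair2.unpair2.unpair1.ofEq (fun x => by simp [hI])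

/-- Second projection of the pullback. -/
def mPi2 (g : Y ⟶ X) (hg : EffFib g) : Wobj g hg ⟶ Y where
  f0 := fun p => p.val.2
  f1 := fun _ _ n => ⟨n.val.unpair.2, pairHom_snd n.property⟩
  tr0 := (CompComputes.id (fun p : WA g => Wα g p)).unpair2.ofEq (fun p => by simp [Wα])
  tr1 := by
    set I := fun x : (b : WA g) × (b' : WA g) × (Wobj g hg).Cell b b' =>
      Nat.pair (Wα g x.1) (Nat.pair (Wα g x.2.1) x.2.2.val) with hI
    exact (CompComputes.id I).unpair2.unpair2.unpair2.ofEq (fun x => by simp [hI])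

/-- The source-target fibration of the path object. -/
def mH (g : Y ⟶ X) (hg : EffFib g) : PYobj g hg ⟶ Wobj g hg where
  f0 := hproj g
  f1 := fun _ _ n => n
  tr0 := (CompComputes.id (fun q : TA g => Tα g q)).unpair1.ofEq (fun q => by simp [Tα, Wobj])
  tr1 := by
    set I := fun x : (b : TA g) × (b' : TA g) × (PYobj g hg).Cell b b' =>
      Nat.pair (Tα g x.1) (Nat.pair (Tα g x.2.1) x.2.2.val) with hI
    exact (CompComputes.id I).unpair2.unpair2.ofEq (fun x => by simp [hI])

/-- The reflexivity map `r`. -/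
noncomputable def idSel (Y : EffObj) : Y.A → ℕ := (idChoice Y).choose

theorem idSel_mem (Y : EffObj) (a : Y.A) : idSel Y a ∈ Y.hom a a :=
  (idChoice Y).choose_spec.1 a

theorem idSel_tr (Y : EffObj) : CompComputes Y.α (idSel Y) :=
  (idChoice Y).choose_spec.2

noncomputable def mR (g : Y ⟶ X) (hg : EffFib g) : Y ⟶ PYobj g hg where
  f0 := fun y => ⟨(y, y, idSel Y y), rfl, idSel_mem Y y⟩
  f1 := fun _ _ μ => ⟨Nat.pair μ.val μ.val, pairHom_intro μ.property μ.property rfl⟩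
  tr0 := by
    refine (CompComputes.pair (CompComputes.pair (CompComputes.id Y.α)
      (CompComputes.id Y.α)) (idSel_tr Y)).ofEq (fun y => ?_)
    simp [Tα, Wα, hproj, PYobj, Wobj]
  tr1 := by
    set I := fun x : (b : Y.A) × (b' : Y.A) × Y.Cell b b' =>
      Nat.pair (Y.α x.1) (Nat.pair (Y.α x.2.1) x.2.2.val) with hI
    have sel : CompComputes I (fun x => x.2.2.val) :=
      (CompComputes.id I).unpair2.unpair2.ofEq (fun x => by simp [hI])
    exact CompComputes.pair sel sel

theorem mR_mS (g : Y ⟶ X) (hg : EffFib g) : mR g hg ≫ mS g hg = 𝟙 Y := by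
  apply EffHom.ext'
  · intro y; rfl
  · intro y z μ
    show ((mS g hg).f1 _ _ ((mR g hg).f1 y z μ)).val = _
    simp [mR, mS]

theorem mR_mT (g : Y ⟶ X) (hg : EffFib g) : mR g hg ≫ mT g hg = 𝟙 Y := by
  apply EffHom.ext'
  · intro y; rfl
  · intro y z μ
    show ((mT g hg).f1 _ _ ((mR g hg).f1 y z μ)).val = _
    simp [mR, mT]

theorem mH_mPi1 (g : Y ⟶ X) (hg : EffFib g) : mH g hg ≫ mPi1 g hg = mS g hg := by
  apply EffHom.ext'
  · intro q; rfl
  · intro p q n; rfl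

theorem mH_mPi2 (g : Y ⟶ X) (hg : EffFib g) : mH g hg ≫ mPi2 g hg = mT g hg := by
  apply EffHom.ext'
  · intro q; rfl
  · intro p q n; rfl

theorem mS_g_eq_mT_g (g : Y ⟶ X) (hg : EffFib g) :
    mS g hg ≫ g = mT g hg ≫ g := by
  apply EffHom.ext'
  · intro q; exact q.property.1
  · intro p q n
    exact pairHom_eqv n.property (pairHom_fst n.property) (pairHom_snd n.property)

end Construction3
section Construction4

variable {Y X : EffObj}

theorem isPB_W (g : Y ⟶ X) (hg : EffFib g) : IsPB (mPi1 g hg) (mPi2 g hg) g g := by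
  constructor
  · apply EffHom.ext'
    · intro p; exact p.property
    · intro p q n
      exact pairHom_eqv n.property (pairHom_fst n.property) (pairHom_snd n.property)
  · intro Q q₁ q₂ hcomm
    have hc0 : ∀ b, g.f0 (q₁.f0 b) = g.f0 (q₂.f0 b) :=
      fun b => congrArg (fun m : Q ⟶ X => m.f0 b) hcomm
    have hc1 : ∀ (b b' : Q.A) (ρ : Q.Cell b b'),
        (g.f1 _ _ (q₁.f1 b b' ρ)).val = (g.f1 _ _ (q₂.f1 b b' ρ)).val :=
      fun b b' ρ => congrArg (fun m : Q ⟶ X => (m.f1 b b' ρ).val) hcomm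
    refine ⟨{ f0 := fun b => ⟨(q₁.f0 b, q₂.f0 b), hc0 b⟩
              f1 := fun b b' ρ => ⟨Nat.pair (q₁.f1 b b' ρ).val (q₂.f1 b b' ρ).val,
                pairHom_intro (q₁.f1 b b' ρ).property (q₂.f1 b b' ρ).property
                  (hc1 b b' ρ)⟩
              tr0 := (CompComputes.pair q₁.tr0 q₂.tr0).ofEq
                (fun b => by simp [Wα, Wobj])
              tr1 := CompComputes.pair q₁.tr1 q₂.tr1 }, ⟨?_, ?_⟩, ?_⟩
    · apply EffHom.ext'
      · intro b; rfl
      · intro b b' ρ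
        show ((mPi1 g hg).f1 _ _ _).val = _
        simp [mPi1]
    · apply EffHom.ext'
      · intro b; rfl
      · intro b b' ρ
        show ((mPi2 g hg).f1 _ _ _).val = _
        simp [mPi2]
    · rintro v ⟨hv1, hv2⟩
      apply EffHom.ext'
      · intro b
        have e1 : (v.f0 b).val.1 = q₁.f0 b := congrArg (fun m : Q ⟶ Y => m.f0 b) hv1
        have e2 : (v.f0 b).val.2 = q₂.f0 b := congrArg (fun m : Q ⟶ Y => m.f0 b) hv2
        exact Subtype.ext (Prod.ext e1 e2)
      · intro b b' ρ
        have e1 : (v.f1 b b' ρ).val.unpair.1 = (q₁.f1 b b' ρ).val :=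
          congrArg (fun m : Q ⟶ Y => (m.f1 b b' ρ).val) hv1
        have e2 : (v.f1 b b' ρ).val.unpair.2 = (q₂.f1 b b' ρ).val :=
          congrArg (fun m : Q ⟶ Y => (m.f1 b b' ρ).val) hv2
        show (v.f1 b b' ρ).val =
          Nat.pair (q₁.f1 b b' ρ).val (q₂.f1 b b' ρ).val
        rw [← e1, ← e2, Nat.pair_unpair]

theorem fib_mH (g : Y ⟶ X) (hg : EffFib g) : EffFib (mH g hg) := by
  constructor
  · -- lifting of 1-cells downstairs
    obtain ⟨iv, ivm, ivtr⟩ := invChoice Y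
    obtain ⟨cm, cmm, cmtr⟩ := cmpChoice Y
    set T := {c : TA g × WA g × ℕ //
      c.2.2 ∈ (Wobj g hg).hom (hproj g c.1) c.2.1} with hT
    let eI : T → {p : Y.A × Y.A × ℕ // p.2.2 ∈ Y.hom p.1 p.2.1} := fun x =>
      ⟨(x.val.1.val.1, x.val.2.1.val.1, x.val.2.2.unpair.1), pairHom_fst x.property⟩
    let eC1 : T → {p : Y.A × Y.A × Y.A × ℕ × ℕ //
        p.2.2.2.1 ∈ Y.hom p.1 p.2.1 ∧ p.2.2.2.2 ∈ Y.hom p.2.1 p.2.2.1} := fun x =>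
      ⟨(x.val.2.1.val.1, x.val.1.val.1, x.val.1.val.2.1, iv (eI x), x.val.1.val.2.2),
        ivm (eI x), x.val.1.property.2⟩
    let eC2 : T → {p : Y.A × Y.A × Y.A × ℕ × ℕ //
        p.2.2.2.1 ∈ Y.hom p.1 p.2.1 ∧ p.2.2.2.2 ∈ Y.hom p.2.1 p.2.2.1} := fun x =>
      ⟨(x.val.2.1.val.1, x.val.1.val.2.1, x.val.2.1.val.2, cm (eC1 x),
        x.val.2.2.unpair.2), cmm (eC1 x), pairHom_snd x.property⟩
    let bLift : T → TA g := fun x =>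
      ⟨(x.val.2.1.val.1, x.val.2.1.val.2, cm (eC2 x)), x.val.2.1.property, cmm (eC2 x)⟩
    set I := fun x : T =>
      Nat.pair (Tα g x.val.1) (Nat.pair (Wα g x.val.2.1) x.val.2.2) with hI
    have s0 : CompComputes I I := CompComputes.id _
    have sy : CompComputes I (fun x => Y.α x.val.1.val.1) :=
      s0.unpair1.unpair1.unpair1.ofEq (fun x => by simp [hI, Tα, Wα, Wobj, hproj])
    have sy' : CompComputes I (fun x => Y.α x.val.1.val.2.1) :=
      s0.unpair1.unpair1.unpair2.ofEq (fun x => by simp [hI, Tα, Wα, Wobj, hproj])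
    have sρ0 : CompComputes I (fun x => x.val.1.val.2.2) :=
      s0.unpair1.unpair2.ofEq (fun x => by simp [hI, Tα, Wα, Wobj, hproj])
    have sz : CompComputes I (fun x => Y.α x.val.2.1.val.1) :=
      s0.unpair2.unpair1.unpair1.ofEq (fun x => by simp [hI, Wα])
    have sz' : CompComputes I (fun x => Y.α x.val.2.1.val.2) :=
      s0.unpair2.unpair1.unpair2.ofEq (fun x => by simp [hI, Wα])
    have sμ : CompComputes I (fun x => x.val.2.2.unpair.1) :=
      s0.unpair2.unpair2.unpair1.ofEq (fun x => by simp [hI])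
    have sν : CompComputes I (fun x => x.val.2.2.unpair.2) :=
      s0.unpair2.unpair2.unpair2.ofEq (fun x => by simp [hI])
    have sinv : CompComputes I (fun x => iv (eI x)) :=
      (ivtr.precomp eI).comp (CompComputes.pair sy (CompComputes.pair sz sμ))
    have sc1 : CompComputes I (fun x => cm (eC1 x)) :=
      (cmtr.precomp eC1).comp (CompComputes.pair sz (CompComputes.pair sy
        (CompComputes.pair sy' (CompComputes.pair sinv sρ0))))
    have sc2 : CompComputes I (fun x => cm (eC2 x)) :=
      (cmtr.precomp eC2).comp (CompComputes.pair sz (CompComputes.pair sy'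
        (CompComputes.pair sz' (CompComputes.pair sc1 sν))))
    have sout : CompComputes I (fun x => Tα g (bLift x)) :=
      (CompComputes.pair (CompComputes.pair sz sz') sc2).ofEq
        (fun x => by simp [Tα, Wα, Wobj, hproj, bLift])
    have sπ : CompComputes I (fun x => x.val.2.2) :=
      s0.unpair2.unpair2.ofEq (fun x => by simp [hI])
    obtain ⟨φ, pφ, hφ⟩ := sout
    obtain ⟨ψ, pψ, hψ⟩ := sπ
    refine ⟨φ, ψ, pφ, pψ, ?_⟩
    intro p w π hπ
    refine ⟨bLift ⟨(p, w, π), hπ⟩, ⟨π, hπ⟩, Subtype.ext rfl, rfl,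
      hφ ⟨(p, w, π), hπ⟩, hψ ⟨(p, w, π), hπ⟩⟩
  · -- lifting of 1-cells between fixed endpoints
    set T := {c : TA g × TA g × ℕ × ℕ //
      c.2.2.2 ∈ (Wobj g hg).hom (hproj g c.1) (hproj g c.2.1)} with hT
    set I := fun x : T =>
      Nat.pair (Tα g x.val.1) (Nat.pair (Tα g x.val.2.1)
        (Nat.pair x.val.2.2.1 x.val.2.2.2)) with hI
    have sπ : CompComputes I (fun x => x.val.2.2.2) :=
      (CompComputes.id I).unpair2.unpair2.unpair2.ofEq (fun x => by simp [hI])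
    obtain ⟨χ, pχ, hχ⟩ := sπ
    refine ⟨χ, pχ, ?_⟩
    intro p q ρ π hπ
    exact ⟨⟨π, hπ⟩, rfl, hχ ⟨(p, q, ρ.val, π), hπ⟩⟩

theorem eqv_mR (g : Y ⟶ X) (hg : EffFib g) : EffEqv (mR g hg) := by
  refine ⟨mS g hg, ?_, ?_⟩
  · rw [mR_mS g hg]
    exact Y.idc
  · -- homotopy from mS ≫ mR to the identity on the path object
    obtain ⟨lf, lfm, lftr⟩ := liftChoice g hg
    have harg : ∀ q : TA g, (g.f1 q.val.1 q.val.1 ⟨idSel Y q.val.1, idSel_mem _ _⟩).val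
        ∈ X.hom (g.f0 q.val.1) (g.f0 q.val.2.1) :=
      fun q => hom_transport rfl q.property.1
        (g.f1 q.val.1 q.val.1 ⟨idSel Y q.val.1, idSel_mem _ _⟩).property
    let eH : TA g → LA g := fun q =>
      ⟨(q.val.1, q.val.2.1, q.val.2.2,
        (g.f1 q.val.1 q.val.1 ⟨idSel Y q.val.1, idSel_mem _ _⟩).val),
        q.property.2, harg q⟩
    set I := fun q : TA g => Tα g q with hI
    have s0 : CompComputes I I := CompComputes.id _
    have sy : CompComputes I (fun q => Y.α q.val.1) :=
      s0.unpair1.unpair1.ofEq (fun q => by simp [hI, Tα, Wα, Wobj, hproj])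
    have sy' : CompComputes I (fun q => Y.α q.val.2.1) :=
      s0.unpair1.unpair2.ofEq (fun q => by simp [hI, Tα, Wα, Wobj, hproj])
    have sρ0 : CompComputes I (fun q => q.val.2.2) :=
      s0.unpair2.ofEq (fun q => by simp [hI, Tα, Wα, Wobj, hproj])
    have sid : CompComputes I (fun q => idSel Y q.val.1) :=
      ((idSel_tr Y).precomp (fun q : TA g => q.val.1)).comp sy
    have sg : CompComputes I
        (fun q => (g.f1 q.val.1 q.val.1 ⟨idSel Y q.val.1, idSel_mem _ _⟩).val) :=
      (g.tr1.precomp (fun q : TA g =>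
        (⟨q.val.1, q.val.1, ⟨idSel Y q.val.1, idSel_mem _ _⟩⟩ :
          (b : Y.A) × (b' : Y.A) × Y.Cell b b'))).comp
        (CompComputes.pair sy (CompComputes.pair sy sid))
    have slf : CompComputes I (fun q => lf (eH q)) :=
      (lftr.precomp eH).comp
        (CompComputes.pair sy (CompComputes.pair sy' (CompComputes.pair sρ0 sg)))
    refine (CompComputes.pair sid slf).toFinds ?_
    intro q
    exact pairHom_intro (idSel_mem _ _) (lfm (eH q)).choose ((lfm (eH q)).choose_spec).symm

/-- A fibration whose domain carries a computable choice of 1-cells between any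
two points in the same fibre. -/
def EffSpecial {B A : EffObj} (f : B ⟶ A) : Prop :=
  ∃ κ : {p : B.A × B.A // f.f0 p.1 = f.f0 p.2} → ℕ,
    (∀ p, κ p ∈ B.hom p.val.1 p.val.2) ∧
    CompComputes (fun p : {p : B.A × B.A // f.f0 p.1 = f.f0 p.2} =>
      Nat.pair (B.α p.val.1) (B.α p.val.2)) κ

theorem special_mH (g : Y ⟶ X) (hg : EffFib g) : EffSpecial (mH g hg) := by
  obtain ⟨ιW, ιWm, ιWtr⟩ := idChoice (Wobj g hg)
  set D := {p : TA g × TA g // (mH g hg).f0 p.1 = (mH g hg).f0 p.2} with hD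
  set I := fun p : D => Nat.pair (Tα g p.val.1) (Tα g p.val.2) with hI
  have sw : CompComputes I (fun p => Wα g (hproj g p.val.1)) :=
    (CompComputes.id I).unpair1.unpair1.ofEq (fun p => by simp [hI, Tα, Wα, Wobj, hproj])
  refine ⟨fun p => ιW (hproj g p.val.1), ?_, (ιWtr.precomp
    (fun p : D => hproj g p.val.1)).comp sw⟩
  intro p
  exact hom_transport (Z := Wobj g hg) rfl p.property (ιWm (hproj g p.val.1))

theorem eqv_mH (g : Y ⟶ X) (hg : EffFib g) (hsp : EffSpecial g) :
    EffEqv (mH g hg) := by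
  obtain ⟨κ, κm, κtr⟩ := hsp
  let k : Wobj g hg ⟶ PYobj g hg :=
    { f0 := fun w => ⟨(w.val.1, w.val.2, κ w), w.property, κm w⟩
      f1 := fun _ _ n => n
      tr0 := by
        refine (CompComputes.pair (CompComputes.id (fun w : WA g => Wα g w)) κtr).ofEq
          (fun w => ?_)
        simp [Tα, Wα, hproj, PYobj, Wobj]
      tr1 := by
        set I := fun x : (b : WA g) × (b' : WA g) × (Wobj g hg).Cell b b' =>
          Nat.pair (Wα g x.1) (Nat.pair (Wα g x.2.1) x.2.2.val) with hI
        exact (CompComputes.id I).unpair2.unpair2.ofEq (fun x => by simp [hI]) }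
  have hk : k ≫ mH g hg = 𝟙 (Wobj g hg) := by
    apply EffHom.ext'
    · intro w; exact Subtype.ext rfl
    · intro w w' n; rfl
  refine ⟨k, ?_, ?_⟩
  · -- mH ≫ k homotopic to identity on the path object
    refine (Wobj g hg).idc.via (hproj g) ?_
    exact (CompComputes.id (fun q : TA g => Tα g q)).unpair1.ofEq (fun q => by simp [Tα, Wα, Wobj, hproj])
  · rw [hk]
    exact (Wobj g hg).idc

theorem effFib_pathData (g : Y ⟶ X) (hg : EffFib g) :
    ∃ (PY W : EffObj) (r : Y ⟶ PY) (s t : PY ⟶ Y) (π₁ π₂ : W ⟶ Y) (h : PY ⟶ W),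
      IsRelPathObj EffPS g r s t ∧ IsPB π₁ π₂ g g ∧ h ≫ π₁ = s ∧ h ≫ π₂ = t ∧
      EffFib h ∧ EffSpecial h ∧ (EffSpecial g → EffEqv h) :=
  ⟨PYobj g hg, Wobj g hg, mR g hg, mS g hg, mT g hg, mPi1 g hg, mPi2 g hg, mH g hg,
    ⟨eqv_mR g hg, mR_mS g hg, mR_mT g hg, mS_g_eq_mT_g g hg,
      Wobj g hg, mPi1 g hg, mPi2 g hg, mH g hg, isPB_W g hg, mH_mPi1 g hg,
      mH_mPi2 g hg, fib_mH g hg⟩,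
    isPB_W g hg, mH_mPi1 g hg, mH_mPi2 g hg, fib_mH g hg, special_mH g hg,
    eqv_mH g hg⟩

end Construction4
/-- In the path category `EFF`, every fibration is a fibration of
sets (i.e. a fibration of 0-types; recall `IsNTypeFib S n` is "fibration of
`(n-2)`-types", so sets correspond to `n = 2`). -/
theorem EFF_every_fibration_is_fibration_of_sets {B A : EffObj} (f : B ⟶ A)
    (hf : EffFib f) : IsNTypeFib EffPS 2 f := by
  obtain ⟨PY, W, r, s, t, π₁, π₂, h, hrel, hpb, he1, he2, hfib, hspec, -⟩ :=
    effFib_pathData f hf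
  obtain ⟨P₂, W₂, r₂, s₂, t₂, ρ₁, ρ₂, h₂, hrel₂, hpb₂, he1₂, he2₂, hfib₂, -, heqv₂⟩ :=
    effFib_pathData h hfib
  exact ⟨hf, PY, W, r, s, t, π₁, π₂, h, hrel, hpb, he1, he2,
    hfib, P₂, W₂, r₂, s₂, t₂, ρ₁, ρ₂, h₂, hrel₂, hpb₂, he1₂, he2₂, hfib₂, heqv₂ hspec⟩

end EffPaper
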